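/- Let Ω ⊆ ℝ^d be a nonempty closed convex set, f : ℝ^d → ℝ a convex function, x₁ ∈ Ω, η > 0, G > 0, and g₁, …, g_T ∈ ℝ^d vectors with ‖g_t‖_∞ ≤ G for all t. Define s_{t,i} = ‖g_{1:t,i}‖₂ (the ℓ₂ norm of the vector of i-th coordinates of g₁,…,g_t), H_t = G·I + diag(s_t), ψ_t(x) = ½(x−x₁)ᵀH_t(x−x₁), and x_{t+1} = argmin_{x∈Ω} { η⟨x, (1/t)∑_{τ=1}^t g_τ⟩ + ψ_t(x)/t } for t = 1,…,T. Then, for any choice of subgradients v_t ∈ ∂f(x_t) and any x ∈ Ω, ∑_{t=1}^T (f(x_t) − f(x)) ≤ ((G + max_{1≤i≤d} ‖g_{1:T,i}‖₂)/(2η)) ‖x − x₁‖² + η ∑_{i=1}^d ‖g_{1:T,i}‖₂ + ∑_{t=1}^T ⟨v_t − g_t, x_t − x⟩. -/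

import Mathlib

set_option maxHeartbeats 1000000
open RealInnerProductSpace Filter

lemma euc_inner_eq {d : ℕ} (u w : EuclideanSpace ℝ (Fin d)) : ⟪u, w⟫ = ∑ i, u i * w i := by
  simp [PiLp.inner_apply, RCLike.inner_apply, conj_trivial]
  exact Finset.sum_congr rfl fun _ _ => mul_comm _ _

lemma euc_norm_sq {d : ℕ} (y : EuclideanSpace ℝ (Fin d)) : ‖y‖ ^ 2 = ∑ i, (y i) ^ 2 := by
  rw [EuclideanSpace.norm_eq, Real.sq_sqrt (by positivity)]
  simp [sq_abs]

lemma fy_coord (a gg c e : ℝ) (ha : 0 < a) :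
    e * (gg * c) ≤ a/2 * c^2 + e^2 * gg^2 / (2*a) := by
  rw [← mul_le_mul_iff_right₀ (show (0:ℝ) < 2*a by linarith)]
  have h2 : 2*a*(a/2*c^2 + e^2*gg^2/(2*a)) = a^2*c^2 + e^2*gg^2 := by field_simp
  rw [h2]
  nlinarith [sq_nonneg (a*c - e*gg)]

lemma quad_strong_opt {d : ℕ} (Ω : Set (EuclideanSpace ℝ (Fin d))) (hconv : Convex ℝ Ω)
    (w : Fin d → ℝ) (hw : ∀ i, 0 ≤ w i) (c x₁ xs : EuclideanSpace ℝ (Fin d)) (hxs : xs ∈ Ω)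
    (hmin : ∀ u ∈ Ω, ⟪c, xs⟫ + (1/2) * ∑ i, w i * (xs i - x₁ i)^2
        ≤ ⟪c, u⟫ + (1/2) * ∑ i, w i * (u i - x₁ i)^2) :
    ∀ u ∈ Ω, ⟪c, xs⟫ + (1/2) * ∑ i, w i * (xs i - x₁ i)^2 + (1/2) * ∑ i, w i * (u i - xs i)^2
      ≤ ⟪c, u⟫ + (1/2) * ∑ i, w i * (u i - x₁ i)^2 := by
  intro u hu
  set D : ℝ := (∑ i, c i * (u i - xs i)) + ∑ i, w i * ((xs i - x₁ i) * (u i - xs i)) with hDdef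
  set Q : ℝ := ∑ i, w i * (u i - xs i)^2 with hQdef
  have hQ : 0 ≤ Q := Finset.sum_nonneg fun i _ => mul_nonneg (hw i) (sq_nonneg _)
  have hexp : ∀ l : ℝ, ⟪c, xs + l • (u - xs)⟫
      + (1/2) * ∑ i, w i * ((xs + l • (u - xs)) i - x₁ i)^2
      = ⟪c, xs⟫ + (1/2) * ∑ i, w i * (xs i - x₁ i)^2 + l * D + l^2/2 * Q := by
    intro l
    simp only [euc_inner_eq, PiLp.add_apply, PiLp.smul_apply, PiLp.sub_apply, smul_eq_mul,
      hDdef, hQdef, Finset.mul_sum, mul_add, add_assoc]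
    rw [← Finset.sum_add_distrib, ← Finset.sum_add_distrib, ← Finset.sum_add_distrib,
      ← Finset.sum_add_distrib, ← Finset.sum_add_distrib]
    exact Finset.sum_congr rfl fun i _ => by ring
  have h0 : ∀ l : ℝ, 0 < l → l ≤ 1 → 0 ≤ l * D + l^2/2 * Q := by
    intro l hl hl1
    have hmem : xs + l • (u - xs) ∈ Ω := by
      have h := hconv hxs hu (sub_nonneg.2 hl1) hl.le (by ring)
      have : xs + l • (u - xs) = (1 - l) • xs + l • u := by module
      rwa [this]
    have := hmin _ hmem
    rw [hexp l] at this
    linarith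
  have hD : 0 ≤ D := by
    have hl : ∀ n : ℕ, -(1/(n+1:ℝ))/2 * Q ≤ D := by
      intro n
      have hpos : (0:ℝ) < 1/(n+1:ℝ) := by positivity
      have h := h0 _ hpos (by rw [div_le_one (by positivity)]; linarith [Nat.cast_nonneg (α := ℝ) n])
      nlinarith
    have ht : Tendsto (fun n : ℕ => -(1/(n+1:ℝ))/2 * Q) atTop (nhds 0) := by
      have h1 : Tendsto (fun n : ℕ => 1/(n+1:ℝ)) atTop (nhds 0) :=
        tendsto_one_div_add_atTop_nhds_zero_nat
      have := ((h1.neg).div_const 2).mul_const Q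
      simpa using this
    exact le_of_tendsto' ht hl
  have h1 := hexp 1
  have hu1 : xs + (1:ℝ) • (u - xs) = u := by module
  rw [hu1] at h1
  rw [h1]
  linarith

lemma adagrad_sum (G : ℝ) (hG : 0 < G) (b : ℕ → ℝ) (T : ℕ)
    (hb : ∀ t ∈ Finset.Icc 1 T, 0 ≤ b t) (hbG : ∀ t ∈ Finset.Icc 1 T, b t ≤ G^2) :
    ∑ t ∈ Finset.Icc 1 T, b t / (G + Real.sqrt (∑ τ ∈ Finset.Icc 1 (t-1), b τ))
      ≤ 2 * Real.sqrt (∑ τ ∈ Finset.Icc 1 T, b τ) := by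
  induction T with
  | zero => simp
  | succ T ih =>
    have hsub : Finset.Icc 1 T ⊆ Finset.Icc 1 (T+1) :=
      Finset.Icc_subset_Icc le_rfl (Nat.le_succ T)
    have ih' := ih (fun t ht => hb t (hsub ht)) (fun t ht => hbG t (hsub ht))
    rw [Finset.sum_Icc_succ_top (Nat.one_le_iff_ne_zero.2 (Nat.succ_ne_zero T)),
        Finset.sum_Icc_succ_top (Nat.one_le_iff_ne_zero.2 (Nat.succ_ne_zero T))]
    simp only [Nat.add_sub_cancel]
    set A : ℝ := ∑ τ ∈ Finset.Icc 1 T, b τ with hA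
    have hA0 : 0 ≤ A := Finset.sum_nonneg fun t ht => hb t (hsub ht)
    set S : ℝ := Real.sqrt A with hS
    set S' : ℝ := Real.sqrt (A + b (T+1)) with hS'
    have hmem : T + 1 ∈ Finset.Icc 1 (T+1) := Finset.mem_Icc.2 ⟨Nat.le_add_left 1 T, le_rfl⟩
    have hb0 : 0 ≤ b (T+1) := hb _ hmem
    have hS0 : 0 ≤ S := Real.sqrt_nonneg _
    have hS'0 : 0 ≤ S' := Real.sqrt_nonneg _
    have hSsq : S^2 = A := Real.sq_sqrt hA0
    have hS'sq : S'^2 = A + b (T+1) := Real.sq_sqrt (by linarith)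
    have hSS' : S ≤ S' := Real.sqrt_le_sqrt (by linarith)
    have hup : S' ≤ G + S := by
      have h1 : A + b (T+1) ≤ (G + S)^2 := by
        have := hbG _ hmem
        nlinarith
      calc S' ≤ Real.sqrt ((G+S)^2) := Real.sqrt_le_sqrt h1
        _ = G + S := Real.sqrt_sq (by linarith)
    have hkey : b (T+1) / (G + S) ≤ 2 * (S' - S) := by
      rw [div_le_iff₀ (by linarith)]
      nlinarith [mul_nonneg (sub_nonneg.2 hSS') (sub_nonneg.2 hup), sq_nonneg (S' - S)]
    linarith

theorem stmt_11 {d : ℕ} (hd : 0 < d)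
    (Ω : Set (EuclideanSpace ℝ (Fin d))) (hne : Ω.Nonempty) (hcl : IsClosed Ω)
    (hconv : Convex ℝ Ω)
    (f : EuclideanSpace ℝ (Fin d) → ℝ) (hf : ConvexOn ℝ Set.univ f)
    (x₁ : EuclideanSpace ℝ (Fin d)) (hx₁mem : x₁ ∈ Ω)
    (η G : ℝ) (hη : 0 < η) (hG : 0 < G)
    (T : ℕ) (g v x : ℕ → EuclideanSpace ℝ (Fin d))
    (hgB : ∀ t ∈ Finset.Icc 1 T, ∀ i, |g t i| ≤ G)
    (hx1 : x 1 = x₁)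
    (hsub : ∀ t ∈ Finset.Icc 1 T, ∀ y, f y ≥ f (x t) + ⟪v t, y - x t⟫)
    (hupdate : ∀ t ∈ Finset.Icc 1 T,
      x (t + 1) ∈ Ω ∧ ∀ u ∈ Ω,
        η * ⟪x (t + 1), (t : ℝ)⁻¹ • ∑ τ ∈ Finset.Icc 1 t, g τ⟫
            + (1 / (t : ℝ)) * ((1 / 2) *
              ∑ i, (G + Real.sqrt (∑ τ ∈ Finset.Icc 1 t, (g τ i) ^ 2)) * (x (t + 1) i - x₁ i) ^ 2)
          ≤ η * ⟪u, (t : ℝ)⁻¹ • ∑ τ ∈ Finset.Icc 1 t, g τ⟫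
            + (1 / (t : ℝ)) * ((1 / 2) *
              ∑ i, (G + Real.sqrt (∑ τ ∈ Finset.Icc 1 t, (g τ i) ^ 2)) * (u i - x₁ i) ^ 2)) :
    ∀ x₀ ∈ Ω,
      ∑ t ∈ Finset.Icc 1 T, (f (x t) - f x₀)
        ≤ (G + ⨆ i, Real.sqrt (∑ τ ∈ Finset.Icc 1 T, (g τ i) ^ 2)) / (2 * η) * ‖x₀ - x₁‖ ^ 2
          + η * ∑ i, Real.sqrt (∑ τ ∈ Finset.Icc 1 T, (g τ i) ^ 2)
          + ∑ t ∈ Finset.Icc 1 T, ⟪v t - g t, x t - x₀⟫ := by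
  intro x₀ hx₀
  set S : ℕ → Fin d → ℝ := fun t i => Real.sqrt (∑ τ ∈ Finset.Icc 1 t, (g τ i) ^ 2) with hSdef
  set a : ℕ → Fin d → ℝ := fun t i => G + S t i with hadef
  set F : ℕ → EuclideanSpace ℝ (Fin d) → ℝ := fun t u =>
    ⟪η • ∑ τ ∈ Finset.Icc 1 t, g τ, u⟫ + (1/2) * ∑ i, a t i * (u i - x₁ i)^2 with hFdef
  have hS0 : ∀ t i, 0 ≤ S t i := fun t i => Real.sqrt_nonneg _
  have hapos : ∀ t i, 0 < a t i := fun t i => by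
    have := hS0 t i; simp only [hadef]; linarith
  have hSmono : ∀ t i, S t i ≤ S (t+1) i := by
    intro t i
    apply Real.sqrt_le_sqrt
    rw [Finset.sum_Icc_succ_top (Nat.one_le_iff_ne_zero.2 (Nat.succ_ne_zero t))]
    nlinarith [sq_nonneg (g (t+1) i)]
  -- x_{t+1} ∈ Ω and minimizes F t over Ω, for all t ≤ T
  have hmin : ∀ t, t ≤ T → x (t+1) ∈ Ω ∧ ∀ u ∈ Ω, F t (x (t+1)) ≤ F t u := by
    intro t htT
    rcases Nat.eq_zero_or_pos t with rfl | ht1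
    · refine ⟨by rw [hx1]; exact hx₁mem, ?_⟩
      intro u hu
      have h1 : F 0 (x 1) = 0 := by simp [hFdef, hx1]
      have h2 : 0 ≤ F 0 u := by
        have he : (Finset.Icc 1 0 : Finset ℕ) = ∅ := rfl
        simp only [hFdef, he, Finset.sum_empty, smul_zero, inner_zero_left, zero_add]
        exact mul_nonneg (by norm_num)
          (Finset.sum_nonneg fun i _ => mul_nonneg (hapos 0 i).le (sq_nonneg _))
      rw [h1]; exact h2
    · have hmem : t ∈ Finset.Icc 1 T := Finset.mem_Icc.2 ⟨ht1, htT⟩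
      obtain ⟨hxΩ, hup⟩ := hupdate t hmem
      refine ⟨hxΩ, ?_⟩
      intro u hu
      have h := hup u hu
      have htpos : (0:ℝ) < (t:ℝ) := by exact_mod_cast ht1
      have hrw : ∀ y : EuclideanSpace ℝ (Fin d),
          η * ⟪y, (t : ℝ)⁻¹ • ∑ τ ∈ Finset.Icc 1 t, g τ⟫
            + (1 / (t : ℝ)) * ((1 / 2) * ∑ i, a t i * (y i - x₁ i) ^ 2)
          = (t:ℝ)⁻¹ * F t y := by
        intro y
        rw [real_inner_smul_right]
        simp only [hFdef]
        rw [real_inner_smul_left, real_inner_comm]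
        field_simp
      rw [hrw, hrw] at h
      exact le_of_mul_le_mul_left (by simpa [mul_comm] using h) (by positivity : (0:ℝ) < (t:ℝ)⁻¹)
  -- strong optimality
  have hstrong : ∀ t, t ≤ T → ∀ u ∈ Ω,
      F t (x (t+1)) + (1/2) * ∑ i, a t i * (u i - x (t+1) i)^2 ≤ F t u := by
    intro t htT u hu
    obtain ⟨hxΩ, hm⟩ := hmin t htT
    have h := quad_strong_opt Ω hconv (a t) (fun i => (hapos t i).le)
      (η • ∑ τ ∈ Finset.Icc 1 t, g τ) x₁ (x (t+1)) hxΩ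
      (by intro u' hu'; have := hm u' hu'; simpa only [hFdef] using this) u hu
    simpa only [hFdef] using h
  -- the telescoping induction
  have hΦ : ∀ t, t ≤ T →
      (∑ τ ∈ Finset.Icc 1 t, (η * ⟪g τ, x τ⟫ - η^2/2 * ∑ i, (g τ i)^2 / a (τ-1) i))
        ≤ F t (x (t+1)) := by
    intro t
    induction t with
    | zero => intro _; simp [hFdef, hx1]
    | succ t ih =>
      intro htT
      have ht' : t ≤ T := Nat.le_of_succ_le htT
      have IH := ih ht'
      have hxt2 : x (t+1+1) ∈ Ω := (hmin (t+1) htT).1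
      have step1 : F t (x (t+1+1)) + η * ⟪g (t+1), x (t+1+1)⟫ ≤ F (t+1) (x (t+1+1)) := by
        have hsum : ∑ τ ∈ Finset.Icc 1 (t+1), g τ = (∑ τ ∈ Finset.Icc 1 t, g τ) + g (t+1) :=
          Finset.sum_Icc_succ_top (Nat.one_le_iff_ne_zero.2 (Nat.succ_ne_zero t)) g
        have hmono : ∑ i, a t i * (x (t+1+1) i - x₁ i)^2
            ≤ ∑ i, a (t+1) i * (x (t+1+1) i - x₁ i)^2 :=
          Finset.sum_le_sum fun i _ => mul_le_mul_of_nonneg_right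
            (by simp only [hadef]; linarith [hSmono t i]) (sq_nonneg _)
        simp only [hFdef, hsum, smul_add, inner_add_left, real_inner_smul_left]
        linarith
      have step2 : F t (x (t+1)) + (1/2) * ∑ i, a t i * (x (t+1+1) i - x (t+1) i)^2
          ≤ F t (x (t+1+1)) := hstrong t ht' (x (t+1+1)) hxt2
      have step3 : η * ⟪g (t+1), x (t+1)⟫ - η * ⟪g (t+1), x (t+1+1)⟫
          ≤ (1/2) * ∑ i, a t i * (x (t+1+1) i - x (t+1) i)^2
            + η^2/2 * ∑ i, (g (t+1) i)^2 / a t i := by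
        have key : ∀ i : Fin d, η * (g (t+1) i * (x (t+1) i - x (t+1+1) i))
            ≤ 1/2 * (a t i * (x (t+1+1) i - x (t+1) i)^2)
              + η^2/2 * ((g (t+1) i)^2 / a t i) := by
          intro i
          have h := fy_coord (a t i) (g (t+1) i) (x (t+1) i - x (t+1+1) i) η (hapos t i)
          have heq : a t i/2 * (x (t+1) i - x (t+1+1) i)^2
              + η^2 * (g (t+1) i)^2 / (2 * a t i)
              = 1/2 * (a t i * (x (t+1+1) i - x (t+1) i)^2)
                + η^2/2 * ((g (t+1) i)^2 / a t i) := by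
            field_simp [(hapos t i).ne']
            ring
          rw [heq] at h
          exact h
        calc η * ⟪g (t+1), x (t+1)⟫ - η * ⟪g (t+1), x (t+1+1)⟫
            = ∑ i, η * (g (t+1) i * (x (t+1) i - x (t+1+1) i)) := by
              rw [euc_inner_eq, euc_inner_eq, Finset.mul_sum, Finset.mul_sum,
                ← Finset.sum_sub_distrib]
              exact Finset.sum_congr rfl fun i _ => by ring
          _ ≤ ∑ i, (1/2 * (a t i * (x (t+1+1) i - x (t+1) i)^2)
                + η^2/2 * ((g (t+1) i)^2 / a t i)) := Finset.sum_le_sum fun i _ => key i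
          _ = (1/2) * ∑ i, a t i * (x (t+1+1) i - x (t+1) i)^2
                + η^2/2 * ∑ i, (g (t+1) i)^2 / a t i := by
              rw [Finset.sum_add_distrib, Finset.mul_sum, Finset.mul_sum]
      rw [Finset.sum_Icc_succ_top (Nat.one_le_iff_ne_zero.2 (Nat.succ_ne_zero t))]
      simp only [Nat.add_sub_cancel]
      set L1 := ∑ τ ∈ Finset.Icc 1 t, (η * ⟪g τ, x τ⟫ - η^2/2 * ∑ i, (g τ i)^2 / a (τ-1) i) with hL1
      set A1 := η * ⟪g (t+1), x (t+1)⟫ with hA1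
      set A2 := η * ⟪g (t+1), x (t+1+1)⟫ with hA2
      set B1 := (1/2) * ∑ i, a t i * (x (t+1+1) i - x (t+1) i)^2 with hB1
      set C1 := η^2/2 * ∑ i, (g (t+1) i)^2 / a t i with hC1
      linarith
  -- assemble
  set P : ℝ := ∑ τ ∈ Finset.Icc 1 T, ⟪g τ, x τ⟫ with hPdef
  set Qs : ℝ := ∑ τ ∈ Finset.Icc 1 T, ⟪g τ, x₀⟫ with hQdef
  set R : ℝ := ∑ τ ∈ Finset.Icc 1 T, ∑ i, (g τ i)^2 / a (τ-1) i with hRdef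
  set quad : ℝ := ∑ i, a T i * (x₀ i - x₁ i)^2 with hquaddef
  set s : ℝ := ∑ i, S T i with hsdef
  have hmain : η * P - η^2/2 * R ≤ η * Qs + (1/2) * quad := by
    have h1 := (hΦ T le_rfl).trans ((hmin T le_rfl).2 x₀ hx₀)
    have hL : ∑ τ ∈ Finset.Icc 1 T, (η * ⟪g τ, x τ⟫ - η^2/2 * ∑ i, (g τ i)^2 / a (τ-1) i)
        = η * P - η^2/2 * R := by
      rw [Finset.sum_sub_distrib, ← Finset.mul_sum, ← Finset.mul_sum]
    have hR : F T x₀ = η * Qs + (1/2) * quad := by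
      simp only [hFdef, real_inner_smul_left, sum_inner, hQdef, hquaddef, Finset.mul_sum]
    rw [hL, hR] at h1
    exact h1
  have hsup : ∀ i, S T i ≤ ⨆ j, S T j := fun i =>
    le_ciSup (Set.Finite.bddAbove (Set.finite_range _)) i
  have hquad : quad ≤ (G + ⨆ i, S T i) * ‖x₀ - x₁‖^2 := by
    rw [euc_norm_sq, Finset.mul_sum, hquaddef]
    refine Finset.sum_le_sum fun i _ => ?_
    have h1 : (x₀ - x₁) i = x₀ i - x₁ i := rfl
    rw [h1]
    exact mul_le_mul_of_nonneg_right (by simp only [hadef]; linarith [hsup i]) (sq_nonneg _)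
  have hB : R ≤ 2 * s := by
    rw [hRdef, Finset.sum_comm, hsdef, Finset.mul_sum]
    refine Finset.sum_le_sum fun i _ => ?_
    have h := adagrad_sum G hG (fun τ => (g τ i)^2) T (fun τ _ => sq_nonneg _)
      (fun τ hτ => by
        calc (g τ i)^2 = |g τ i|^2 := (sq_abs _).symm
          _ ≤ G^2 := pow_le_pow_left₀ (abs_nonneg _) (hgB τ hτ i) 2)
    simpa [hadef, hSdef] using h
  have hGsum : ∑ τ ∈ Finset.Icc 1 T, ⟪g τ, x τ - x₀⟫
      ≤ (G + ⨆ i, S T i) / (2*η) * ‖x₀ - x₁‖^2 + η * s := by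
    have hPQ : ∑ τ ∈ Finset.Icc 1 T, ⟪g τ, x τ - x₀⟫ = P - Qs := by
      rw [hPdef, hQdef, ← Finset.sum_sub_distrib]
      exact Finset.sum_congr rfl fun τ _ => by rw [inner_sub_right]
    have h1 : η * (P - Qs) ≤ (1/2) * ((G + ⨆ i, S T i) * ‖x₀ - x₁‖^2) + η^2 * s := by
      have h2 : η^2/2 * R ≤ η^2/2 * (2*s) := mul_le_mul_of_nonneg_left hB (by positivity)
      nlinarith [hmain, hquad]
    rw [hPQ]
    calc P - Qs = (η * (P - Qs)) / η := by field_simp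
      _ ≤ ((1/2) * ((G + ⨆ i, S T i) * ‖x₀ - x₁‖^2) + η^2 * s) / η := by
          apply div_le_div_of_nonneg_right h1 hη.le
      _ = (G + ⨆ i, S T i) / (2*η) * ‖x₀ - x₁‖^2 + η * s := by
          field_simp
  have hfx : ∀ τ ∈ Finset.Icc 1 T,
      f (x τ) - f x₀ ≤ ⟪g τ, x τ - x₀⟫ + ⟪v τ - g τ, x τ - x₀⟫ := by
    intro τ hτ
    have h := hsub τ hτ x₀
    have hv : ⟪g τ, x τ - x₀⟫ + ⟪v τ - g τ, x τ - x₀⟫ = -⟪v τ, x₀ - x τ⟫ := by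
      rw [inner_sub_left, ← inner_neg_right]
      have : -(x₀ - x τ) = x τ - x₀ := by abel
      rw [this]
      ring
    linarith
  calc ∑ t ∈ Finset.Icc 1 T, (f (x t) - f x₀)
      ≤ ∑ τ ∈ Finset.Icc 1 T, (⟪g τ, x τ - x₀⟫ + ⟪v τ - g τ, x τ - x₀⟫) :=
        Finset.sum_le_sum hfx
    _ = (∑ τ ∈ Finset.Icc 1 T, ⟪g τ, x τ - x₀⟫)
        + ∑ τ ∈ Finset.Icc 1 T, ⟪v τ - g τ, x τ - x₀⟫ := Finset.sum_add_distrib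
    _ ≤ ((G + ⨆ i, S T i) / (2*η) * ‖x₀ - x₁‖^2 + η * s)
        + ∑ τ ∈ Finset.Icc 1 T, ⟪v τ - g τ, x τ - x₀⟫ := by linarith [hGsum]
    _ = _ := by simp only [hSdef, hsdef]
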